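/- arXiv:2501.03532 — 2 statements merged into one kernel-verified Lean document; each statement's English description precedes it below -/
import Mathlib

section
/- Let d ≥ 1, let R₀ = ∏_{i=1}^d I_i ⊆ ℝ^d be a compact rectangle, and let f be a regular curved function on [a₀, a₀+δ₀] × R₀ with data (c₀, α, C_α, η, A_η) and sup-norm bounds B₁ ≥ ‖∂_a f‖_∞, B₂ ≥ ‖∇_x f‖_∞, B₃ ≥ ‖∇_x ∂_a f‖_∞, B₄ ≥ ‖D²_x f‖_∞. Then there exist constants ε > 0 and C > 0 depending only on d, c₀, α, C_α, η, A_η, B₁, B₂, B₃, B₄ such that: for all a, a' ∈ [a₀, a₀+δ₀] with 0 < |a' − a| ≤ ε, and for every x₁ ∈ R₀ whose Euclidean distance to the boundary of R₀ is at least C |a' − a|, there exists u ∈ ℝ^d with |u| ≤ C |a' − a|, x₁ − u ∈ R₀, and ∇_x f(a', x₁ − u) = ∇_x f(a, x₁). -/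
open MeasureTheory Metric Set

noncomputable section

/-- The compact axis-parallel rectangle `∏ i, [lo i, hi i]` in `ℝ^d`. -/
def Rect (d : ℕ) (lo hi : Fin d → ℝ) : Set (EuclideanSpace ℝ (Fin d)) :=
  {x | ∀ i, x i ∈ Set.Icc (lo i) (hi i)}

/-- `f : [a₀, a₀+δ₀] × R₀ → ℝ` is a *regular curved function* with data
`(c₀, α, Cα, η, Aη)` (Definition 1.2 of the paper).  The functions `fa`, `fx`, `fax`, `fxx`
are witnesses for `∂ₐf`, `∇ₓf`, `∇ₓ∂ₐf` and the Hessian `D²ₓf` respectively. -/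
structure IsRegularCurvedFunction (d : ℕ) (a₀ δ₀ : ℝ) (lo hi : Fin d → ℝ)
    (f fa : ℝ → EuclideanSpace ℝ (Fin d) → ℝ)
    (fx fax : ℝ → EuclideanSpace ℝ (Fin d) → EuclideanSpace ℝ (Fin d))
    (fxx : ℝ → EuclideanSpace ℝ (Fin d) → Matrix (Fin d) (Fin d) ℝ)
    (c₀ α Cα η Aη : ℝ) : Prop where
  δ₀_pos : 0 < δ₀
  rect_pos : ∀ i, lo i < hi i
  c₀_pos : 0 < c₀
  α_mem : α ∈ Set.Ioc (0:ℝ) 1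
  Cα_pos : 0 < Cα
  η_mem : η ∈ Set.Ioc (0:ℝ) 1
  Aη_pos : 0 < Aη
  /-- `fa` is the partial derivative of `f` in the parameter `a`. -/
  hasDeriv_a : ∀ a ∈ Set.Icc a₀ (a₀ + δ₀), ∀ x ∈ Rect d lo hi,
    HasDerivWithinAt (fun t => f t x) (fa a x) (Set.Icc a₀ (a₀ + δ₀)) a
  /-- `fx` is the gradient of `f` in `x`. -/
  hasGrad_x : ∀ a ∈ Set.Icc a₀ (a₀ + δ₀), ∀ x ∈ Rect d lo hi,
    HasGradientWithinAt (f a) (fx a x) (Rect d lo hi) x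
  /-- `fax` is the gradient in `x` of `∂ₐ f`. -/
  hasGrad_ax : ∀ a ∈ Set.Icc a₀ (a₀ + δ₀), ∀ x ∈ Rect d lo hi,
    HasGradientWithinAt (fun y => fa a y) (fax a x) (Rect d lo hi) x
  /-- `fxx` is the Hessian matrix of `f` in `x`. -/
  hasHessian : ∀ a ∈ Set.Icc a₀ (a₀ + δ₀), ∀ x ∈ Rect d lo hi, ∀ l,
    HasGradientWithinAt (fun y => fx a y l)
      ((WithLp.equiv 2 (Fin d → ℝ)).symm fun k => fxx a x k l) (Rect d lo hi) x
  /-- The curvature condition (1.3): `|det D²ₓ f| ≥ c₀`. -/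
  curved : ∀ a ∈ Set.Icc a₀ (a₀ + δ₀), ∀ x ∈ Rect d lo hi, c₀ ≤ |(fxx a x).det|
  /-- Hölder continuity (1.4) of the Hessian in `x` (entrywise). -/
  hess_holder : ∀ a ∈ Set.Icc a₀ (a₀ + δ₀), ∀ x ∈ Rect d lo hi, ∀ x' ∈ Rect d lo hi,
    ∀ k l, |fxx a x k l - fxx a x' k l| ≤ Cα * ‖x - x'‖ ^ α
  /-- Hölder continuity (1.5) of `∂ₐ f` in `a`. -/
  fa_holder : ∀ a ∈ Set.Icc a₀ (a₀ + δ₀), ∀ a' ∈ Set.Icc a₀ (a₀ + δ₀), ∀ x ∈ Rect d lo hi,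
    |fa a x - fa a' x| ≤ Aη * |a - a'| ^ η
  /-- Hölder continuity (1.6) of `∇ₓ f` in `a`. -/
  fx_holder : ∀ a ∈ Set.Icc a₀ (a₀ + δ₀), ∀ a' ∈ Set.Icc a₀ (a₀ + δ₀), ∀ x ∈ Rect d lo hi,
    ‖fx a x - fx a' x‖ ≤ Aη * |a - a'| ^ η

namespace TangencyAux

open scoped Matrix

variable {d : ℕ}

lemma abs_coord_le_norm (v : EuclideanSpace ℝ (Fin d)) (i : Fin d) : |v i| ≤ ‖v‖ := by
  rw [EuclideanSpace.norm_eq]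
  rw [← Real.sqrt_sq_eq_abs]
  apply Real.sqrt_le_sqrt
  have : |v i|^2 ≤ ∑ j, ‖v j‖^2 := by
    have := Finset.single_le_sum (f := fun j => ‖v j‖^2) (fun j _ => sq_nonneg _)
      (Finset.mem_univ i)
    simpa [Real.norm_eq_abs, sq_abs] using this
  simpa [sq_abs] using this

lemma norm_le_of_coord {v : EuclideanSpace ℝ (Fin d)} {c : ℝ} (hc : 0 ≤ c)
    (h : ∀ i, |v i| ≤ c) : ‖v‖ ≤ Real.sqrt d * c := by
  rw [EuclideanSpace.norm_eq]
  have h1 : ∑ j, ‖v j‖^2 ≤ (d : ℝ) * c^2 := by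
    calc ∑ j, ‖v j‖^2 ≤ ∑ _j : Fin d, c^2 := by
          apply Finset.sum_le_sum
          intro j _
          have := h j
          rw [Real.norm_eq_abs]
          nlinarith [abs_nonneg (v j)]
      _ = (d : ℝ) * c^2 := by simp [mul_comm]
  calc Real.sqrt (∑ j, ‖v j‖^2) ≤ Real.sqrt ((d:ℝ) * c^2) := Real.sqrt_le_sqrt h1
    _ = Real.sqrt d * c := by
        rw [Real.sqrt_mul (by positivity)]
        rw [Real.sqrt_sq hc]

lemma sum_abs_le (u : EuclideanSpace ℝ (Fin d)) : ∑ k, |u k| ≤ Real.sqrt d * ‖u‖ := by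
  have h0 : (0:ℝ) ≤ ∑ k, |u k| := Finset.sum_nonneg fun k _ => abs_nonneg _
  have h1 : (∑ k, |u k|)^2 ≤ (d : ℝ) * ‖u‖^2 := by
    have := Finset.sum_mul_sq_le_sq_mul_sq Finset.univ (fun _ : Fin d => (1:ℝ))
      (fun k => |u k|)
    simp only [one_mul, one_pow] at this
    calc (∑ k, |u k|)^2 ≤ (∑ _k : Fin d, (1:ℝ)) * ∑ k, |u k|^2 := this
      _ = (d:ℝ) * ∑ k, |u k|^2 := by simp
      _ = (d:ℝ) * ‖u‖^2 := by
          congr 1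
          rw [EuclideanSpace.norm_eq, Real.sq_sqrt (by positivity)]
          simp [sq_abs]
  have h2 := Real.sqrt_le_sqrt h1
  rwa [Real.sqrt_sq h0, show (d:ℝ) * ‖u‖^2 = (Real.sqrt d * ‖u‖)^2 by
    rw [mul_pow, Real.sq_sqrt (by positivity)], Real.sqrt_sq (by positivity)] at h2


def matCLM (d : ℕ) (A : Matrix (Fin d) (Fin d) ℝ) :
    EuclideanSpace ℝ (Fin d) →L[ℝ] EuclideanSpace ℝ (Fin d) :=
  LinearMap.toContinuousLinearMap (Matrix.toEuclideanLin Aᵀ)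

lemma matCLM_apply (A : Matrix (Fin d) (Fin d) ℝ) (u : EuclideanSpace ℝ (Fin d)) (l : Fin d) :
    matCLM d A u l = ∑ k, A k l * u k := by
  simp only [matCLM, LinearMap.coe_toContinuousLinearMap', Matrix.toEuclideanLin_apply,
    WithLp.equiv_symm_apply, PiLp.toLp_apply, Matrix.mulVec, dotProduct, Matrix.transpose_apply]

lemma euclid_ext {u v : EuclideanSpace ℝ (Fin d)} (h : ∀ i, u i = v i) : u = v := by
  cases u; cases v; exact congrArg (WithLp.toLp 2) (funext h)

lemma matCLM_comp (A B : Matrix (Fin d) (Fin d) ℝ) (u : EuclideanSpace ℝ (Fin d)) :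
    matCLM d A (matCLM d B u) = matCLM d (B * A) u := by
  apply euclid_ext
  intro i
  simp only [matCLM_apply, Matrix.mul_apply, Finset.mul_sum, Finset.sum_mul]
  rw [Finset.sum_comm]
  exact Finset.sum_congr rfl fun k _ => Finset.sum_congr rfl fun j _ => by ring

lemma matCLM_one (u : EuclideanSpace ℝ (Fin d)) : matCLM d 1 u = u := by
  apply euclid_ext
  intro i
  rw [matCLM_apply]
  simp [Matrix.one_apply]

lemma matCLM_sub (A B : Matrix (Fin d) (Fin d) ℝ) :
    matCLM d A - matCLM d B = matCLM d (A - B) := by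
  ext u i
  simp only [ContinuousLinearMap.sub_apply, PiLp.sub_apply, matCLM_apply, Matrix.sub_apply,
    sub_mul, Finset.sum_sub_distrib]

lemma matCLM_norm_le {A : Matrix (Fin d) (Fin d) ℝ} {c : ℝ} (hc : 0 ≤ c)
    (h : ∀ k l, |A k l| ≤ c) : ‖matCLM d A‖ ≤ d * c := by
  apply ContinuousLinearMap.opNorm_le_bound _ (by positivity)
  intro u
  have hcoord : ∀ l, |matCLM d A u l| ≤ c * (Real.sqrt d * ‖u‖) := by
    intro l
    rw [matCLM_apply]
    calc |∑ k, A k l * u k| ≤ ∑ k, |A k l * u k| := Finset.abs_sum_le_sum_abs _ _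
      _ ≤ ∑ k, c * |u k| := by
          apply Finset.sum_le_sum
          intro k _
          rw [abs_mul]
          exact mul_le_mul_of_nonneg_right (h k l) (abs_nonneg _)
      _ = c * ∑ k, |u k| := by rw [Finset.mul_sum]
      _ ≤ c * (Real.sqrt d * ‖u‖) := mul_le_mul_of_nonneg_left (sum_abs_le u) hc
  calc ‖matCLM d A u‖ ≤ Real.sqrt d * (c * (Real.sqrt d * ‖u‖)) :=
        norm_le_of_coord (by positivity) hcoord
    _ = (Real.sqrt d * Real.sqrt d) * c * ‖u‖ := by ring
    _ = d * c * ‖u‖ := by rw [Real.mul_self_sqrt (by positivity)]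


lemma abs_det_le {A : Matrix (Fin d) (Fin d) ℝ} {c : ℝ} (hc : 0 ≤ c)
    (h : ∀ k l, |A k l| ≤ c) : |A.det| ≤ d.factorial * c ^ d := by
  rw [Matrix.det_apply]
  calc |∑ σ : Equiv.Perm (Fin d), Equiv.Perm.sign σ • ∏ i, A (σ i) i|
      ≤ ∑ σ : Equiv.Perm (Fin d), |Equiv.Perm.sign σ • ∏ i, A (σ i) i| :=
        Finset.abs_sum_le_sum_abs _ _
    _ ≤ ∑ _σ : Equiv.Perm (Fin d), c ^ d := by
        apply Finset.sum_le_sum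
        intro σ _
        have habs : |Equiv.Perm.sign σ • ∏ i, A (σ i) i| = |∏ i, A (σ i) i| := by
          rcases Int.units_eq_one_or (Equiv.Perm.sign σ) with h1 | h1 <;> simp [h1]
        rw [habs, Finset.abs_prod]
        calc ∏ i, |A (σ i) i| ≤ ∏ _i : Fin d, c :=
              Finset.prod_le_prod (fun i _ => abs_nonneg _) (fun i _ => h _ _)
          _ = c ^ d := by simp
    _ = d.factorial * c ^ d := by
        rw [Finset.sum_const, Finset.card_univ, Fintype.card_perm, Fintype.card_fin,
          nsmul_eq_mul]

lemma inv_entry_le {A : Matrix (Fin d) (Fin d) ℝ} {c₀ B : ℝ} (hc₀ : 0 < c₀)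
    (hdet : c₀ ≤ |A.det|) (h : ∀ k l, |A k l| ≤ B) (k l : Fin d) :
    |A⁻¹ k l| ≤ (1/c₀) * (d.factorial * (max 1 B) ^ d) := by
  have hadj : |A.adjugate k l| ≤ d.factorial * (max 1 B) ^ d := by
    rw [Matrix.adjugate_apply]
    apply abs_det_le (le_trans zero_le_one (le_max_left _ _))
    intro i j
    rw [Matrix.updateRow_apply]
    by_cases hi : i = l
    · simp only [hi, if_pos rfl]
      rw [Pi.single_apply]
      by_cases hj : j = k <;> simp [hj]
    · rw [if_neg hi]
      exact le_trans (h i j) (le_max_right _ _)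
  rw [Matrix.inv_def, Matrix.smul_apply, smul_eq_mul, abs_mul]
  have hdet0 : IsUnit A.det := by
    apply isUnit_iff_ne_zero.2
    intro h0
    rw [h0, abs_zero] at hdet
    linarith
  rw [Ring.inverse_eq_inv', abs_inv]
  apply mul_le_mul _ hadj (abs_nonneg _) (by positivity)
  rw [one_div]
  exact inv_anti₀ hc₀ hdet

lemma abs_deriv_le_of_lip {φ : ℝ → ℝ} {c L r : ℝ} (hr : 0 < r)
    (hφ : HasDerivWithinAt φ c (Set.Icc 0 r) 0)
    (hL : ∀ t ∈ Set.Icc (0:ℝ) r, |φ t - φ 0| ≤ L * t) : |c| ≤ L := by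
  have h1 := hasDerivWithinAt_iff_tendsto_slope.1 hφ
  have hsub : Set.Ioc (0:ℝ) r ⊆ Set.Icc 0 r \ {0} := by
    intro t ht
    exact ⟨⟨ht.1.le, ht.2⟩, ne_of_gt ht.1⟩
  have h2 : Filter.Tendsto (slope φ 0) (nhdsWithin 0 (Set.Ioc (0:ℝ) r)) (nhds c) :=
    h1.mono_left (nhdsWithin_mono 0 hsub)
  have hne : (nhdsWithin (0:ℝ) (Set.Ioc (0:ℝ) r)).NeBot := by
    rw [nhdsWithin_Ioc_eq_nhdsGT hr]
    infer_instance
  apply le_of_tendsto h2.abs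
  filter_upwards [self_mem_nhdsWithin] with t ht
  rw [slope_def_field]
  rw [abs_div]
  rw [div_le_iff₀ (by simpa using abs_pos.2 (ne_of_gt ht.1))]
  have := hL t ⟨ht.1.le, ht.2⟩
  calc |φ t - φ 0| ≤ L * t := this
    _ ≤ L * |t - 0| := by rw [sub_zero, abs_of_pos ht.1]


variable {lo hi : Fin d → ℝ}

lemma convex_rect : Convex ℝ (Rect d lo hi) := by
  intro x hx y hy a b ha hb hab i
  have h := (convex_Icc (lo i) (hi i)) (hx i) (hy i) ha hb hab
  simpa [PiLp.add_apply, PiLp.smul_apply, smul_eq_mul] using h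

lemma closedBall_subset_rect {x₁ : EuclideanSpace ℝ (Fin d)} {r : ℝ}
    (h : ∀ i, lo i + r ≤ x₁ i ∧ x₁ i ≤ hi i - r) :
    Metric.closedBall x₁ r ⊆ Rect d lo hi := by
  intro y hy i
  have hn : ‖y - x₁‖ ≤ r := by rwa [← dist_eq_norm, ← Metric.mem_closedBall]
  have hyi : |y i - x₁ i| ≤ r := by
    have := abs_coord_le_norm (y - x₁) i
    rw [PiLp.sub_apply] at this
    linarith
  rcases abs_le.1 hyi with ⟨h1, h2⟩
  exact ⟨by linarith [(h i).1], by linarith [(h i).2]⟩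

lemma update_lo_mem_frontier (hrect : ∀ i, lo i < hi i) {x₁ : EuclideanSpace ℝ (Fin d)}
    (hx : x₁ ∈ Rect d lo hi) (i : Fin d) :
    (WithLp.equiv 2 (Fin d → ℝ)).symm
      (Function.update ((WithLp.equiv 2 (Fin d → ℝ)) x₁) i (lo i)) ∈
      frontier (Rect d lo hi) := by
  set y := (WithLp.equiv 2 (Fin d → ℝ)).symm
      (Function.update ((WithLp.equiv 2 (Fin d → ℝ)) x₁) i (lo i)) with hy
  have hyco : ∀ j, y j = if j = i then lo i else x₁ j := by
    intro j
    rw [hy, WithLp.equiv_symm_apply, PiLp.toLp_apply, Function.update_apply]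
    rfl
  have hymem : y ∈ Rect d lo hi := by
    intro j
    rw [hyco]
    by_cases hj : j = i
    · subst hj; simp only [if_pos rfl]; exact ⟨le_refl _, (hrect j).le⟩
    · rw [if_neg hj]; exact hx j
  rw [frontier_eq_closure_inter_closure]
  refine ⟨subset_closure hymem, ?_⟩
  have htend : Filter.Tendsto
      (fun n : ℕ => y - ((1:ℝ)/(n+1)) • EuclideanSpace.single i (1:ℝ)) Filter.atTop (nhds y) := by
    have h1 : Filter.Tendsto (fun n : ℕ => ((1:ℝ)/(n+1)) • EuclideanSpace.single i (1:ℝ))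
        Filter.atTop (nhds ((0:ℝ) • EuclideanSpace.single i (1:ℝ))) :=
      tendsto_one_div_add_atTop_nhds_zero_nat.smul_const _
    rw [zero_smul] at h1
    simpa using tendsto_const_nhds.sub h1
  apply mem_closure_of_tendsto htend
  filter_upwards with n
  intro hmem
  have := (hmem i).1
  rw [PiLp.sub_apply, PiLp.smul_apply, EuclideanSpace.single_apply, if_pos rfl, hyco,
    if_pos rfl, smul_eq_mul, mul_one] at this
  have hpos : (0:ℝ) < 1/(n+1) := by positivity
  linarith

lemma update_hi_mem_frontier (hrect : ∀ i, lo i < hi i) {x₁ : EuclideanSpace ℝ (Fin d)}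
    (hx : x₁ ∈ Rect d lo hi) (i : Fin d) :
    (WithLp.equiv 2 (Fin d → ℝ)).symm
      (Function.update ((WithLp.equiv 2 (Fin d → ℝ)) x₁) i (hi i)) ∈
      frontier (Rect d lo hi) := by
  set y := (WithLp.equiv 2 (Fin d → ℝ)).symm
      (Function.update ((WithLp.equiv 2 (Fin d → ℝ)) x₁) i (hi i)) with hy
  have hyco : ∀ j, y j = if j = i then hi i else x₁ j := by
    intro j
    rw [hy, WithLp.equiv_symm_apply, PiLp.toLp_apply, Function.update_apply]
    rfl
  have hymem : y ∈ Rect d lo hi := by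
    intro j
    rw [hyco]
    by_cases hj : j = i
    · subst hj; simp only [if_pos rfl]; exact ⟨(hrect j).le, le_refl _⟩
    · rw [if_neg hj]; exact hx j
  rw [frontier_eq_closure_inter_closure]
  refine ⟨subset_closure hymem, ?_⟩
  have htend : Filter.Tendsto
      (fun n : ℕ => y + ((1:ℝ)/(n+1)) • EuclideanSpace.single i (1:ℝ)) Filter.atTop (nhds y) := by
    have h1 : Filter.Tendsto (fun n : ℕ => ((1:ℝ)/(n+1)) • EuclideanSpace.single i (1:ℝ))
        Filter.atTop (nhds ((0:ℝ) • EuclideanSpace.single i (1:ℝ))) :=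
      tendsto_one_div_add_atTop_nhds_zero_nat.smul_const _
    rw [zero_smul] at h1
    simpa using tendsto_const_nhds.add h1
  apply mem_closure_of_tendsto htend
  filter_upwards with n
  intro hmem
  have := (hmem i).2
  rw [PiLp.add_apply, PiLp.smul_apply, EuclideanSpace.single_apply, if_pos rfl, hyco,
    if_pos rfl, smul_eq_mul, mul_one] at this
  have hpos : (0:ℝ) < 1/(n+1) := by positivity
  linarith

lemma coord_bounds_of_infDist (hrect : ∀ i, lo i < hi i) {x₁ : EuclideanSpace ℝ (Fin d)}
    (hx : x₁ ∈ Rect d lo hi) {r : ℝ}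
    (hr : r ≤ Metric.infDist x₁ (frontier (Rect d lo hi))) (i : Fin d) :
    lo i + r ≤ x₁ i ∧ x₁ i ≤ hi i - r := by
  constructor
  · have hf := update_lo_mem_frontier hrect hx i
    have hd := Metric.infDist_le_dist_of_mem (x := x₁) hf
    have heq : dist x₁ ((WithLp.equiv 2 (Fin d → ℝ)).symm
        (Function.update ((WithLp.equiv 2 (Fin d → ℝ)) x₁) i (lo i))) = x₁ i - lo i := by
      rw [dist_eq_norm]
      have : x₁ - (WithLp.equiv 2 (Fin d → ℝ)).symm
          (Function.update ((WithLp.equiv 2 (Fin d → ℝ)) x₁) i (lo i)) =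
          EuclideanSpace.single i (x₁ i - lo i) := by
        apply euclid_ext
        intro j
        rw [PiLp.sub_apply]
        change x₁ j - Function.update ((WithLp.equiv 2 (Fin d → ℝ)) x₁) i (lo i) j = _
        rw [Function.update_apply,
          EuclideanSpace.single_apply]
        by_cases hj : j = i
        · subst hj; simp
        · simp [hj]
      rw [this, EuclideanSpace.norm_single, Real.norm_eq_abs, abs_of_nonneg (by linarith [(hx i).1])]
    rw [heq] at hd
    linarith
  · have hf := update_hi_mem_frontier hrect hx i
    have hd := Metric.infDist_le_dist_of_mem (x := x₁) hf
    have heq : dist x₁ ((WithLp.equiv 2 (Fin d → ℝ)).symm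
        (Function.update ((WithLp.equiv 2 (Fin d → ℝ)) x₁) i (hi i))) = hi i - x₁ i := by
      rw [dist_eq_norm]
      have : x₁ - (WithLp.equiv 2 (Fin d → ℝ)).symm
          (Function.update ((WithLp.equiv 2 (Fin d → ℝ)) x₁) i (hi i)) =
          EuclideanSpace.single i (x₁ i - hi i) := by
        apply euclid_ext
        intro j
        rw [PiLp.sub_apply]
        change x₁ j - Function.update ((WithLp.equiv 2 (Fin d → ℝ)) x₁) i (hi i) j = _
        rw [Function.update_apply,
          EuclideanSpace.single_apply]
        by_cases hj : j = i
        · subst hj; simp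
        · simp [hj]
      rw [this, EuclideanSpace.norm_single, Real.norm_eq_abs, abs_of_nonpos (by linarith [(hx i).2])]
      ring
    rw [heq] at hd
    linarith

lemma hasFDeriv_matCLM {fx' : EuclideanSpace ℝ (Fin d) → EuclideanSpace ℝ (Fin d)}
    {A : Matrix (Fin d) (Fin d) ℝ} {s : Set (EuclideanSpace ℝ (Fin d))}
    {y : EuclideanSpace ℝ (Fin d)}
    (hcomp : ∀ l, HasGradientWithinAt (fun z => fx' z l)
      ((WithLp.equiv 2 (Fin d → ℝ)).symm fun k => A k l) s y) :
    HasFDerivWithinAt fx' (matCLM d A) s y := by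
  have hpi : HasFDerivWithinAt (fun z l => fx' z l)
      (ContinuousLinearMap.pi fun l =>
        (InnerProductSpace.toDual ℝ (EuclideanSpace ℝ (Fin d))
          ((WithLp.equiv 2 (Fin d → ℝ)).symm fun k => A k l) :
            EuclideanSpace ℝ (Fin d) →L[ℝ] ℝ)) s y :=
    hasFDerivWithinAt_pi.2 fun l => (hcomp l).hasFDerivWithinAt
  have hcomp2 := ((EuclideanSpace.equiv (Fin d) ℝ).symm :
      (Fin d → ℝ) →L[ℝ] EuclideanSpace ℝ (Fin d)).hasFDerivAt.comp_hasFDerivWithinAt y hpi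
  have hEq : (((EuclideanSpace.equiv (Fin d) ℝ).symm :
      (Fin d → ℝ) →L[ℝ] EuclideanSpace ℝ (Fin d)).comp
      (ContinuousLinearMap.pi fun l =>
        (InnerProductSpace.toDual ℝ (EuclideanSpace ℝ (Fin d))
          ((WithLp.equiv 2 (Fin d → ℝ)).symm fun k => A k l) :
            EuclideanSpace ℝ (Fin d) →L[ℝ] ℝ))) = matCLM d A := by
    ext u l
    rw [matCLM_apply]
    simp only [ContinuousLinearMap.coe_comp', Function.comp_apply,
      ContinuousLinearEquiv.coe_coe, ContinuousLinearMap.pi_apply,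
      InnerProductSpace.toDual_apply_apply]
    have hrfl : ((EuclideanSpace.equiv (Fin d) ℝ).symm
        ((ContinuousLinearMap.pi fun l =>
          (InnerProductSpace.toDual ℝ (EuclideanSpace ℝ (Fin d))
            ((WithLp.equiv 2 (Fin d → ℝ)).symm fun k => A k l) :
              EuclideanSpace ℝ (Fin d) →L[ℝ] ℝ)) u)) l
        = (inner ℝ ((WithLp.equiv 2 (Fin d → ℝ)).symm fun k => A k l) u : ℝ) := rfl
    rw [hrfl, PiLp.inner_apply]
    simp [WithLp.equiv_symm_apply, PiLp.toLp_apply, RCLike.inner_apply, conj_trivial]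
    exact Finset.sum_congr rfl fun k _ => mul_comm _ _
  rw [hEq] at hcomp2
  exact hcomp2


end TangencyAux

set_option maxHeartbeats 2000000

/-- **Quantitative implicit-function-theorem step (Step 1 of Section 2).**
For parameters `a, a'` that are close, and a point `x₁` sufficiently far from the
boundary of the rectangle, there is a small horizontal translation `u` making the
graph of `f(a', ·)`, after translation, tangent to the graph of `f(a, ·)` at `x₁`,
i.e. `∇ₓ f(a', x₁ - u) = ∇ₓ f(a, x₁)`.  The constants `ε, C` depend only on `d` and
the regularity data (not on the rectangle, `a₀` or `δ₀`). -/
theorem tangency_translation_exists (d : ℕ) (hd : 1 ≤ d)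
    (c₀ α Cα η Aη B₁ B₂ B₃ B₄ : ℝ) :
    ∃ ε : ℝ, 0 < ε ∧ ∃ C : ℝ, 0 < C ∧
      ∀ (a₀ δ₀ : ℝ) (lo hi : Fin d → ℝ)
        (f fa : ℝ → EuclideanSpace ℝ (Fin d) → ℝ)
        (fx fax : ℝ → EuclideanSpace ℝ (Fin d) → EuclideanSpace ℝ (Fin d))
        (fxx : ℝ → EuclideanSpace ℝ (Fin d) → Matrix (Fin d) (Fin d) ℝ),
        IsRegularCurvedFunction d a₀ δ₀ lo hi f fa fx fax fxx c₀ α Cα η Aη →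
        (∀ a ∈ Set.Icc a₀ (a₀ + δ₀), ∀ x ∈ Rect d lo hi, |fa a x| ≤ B₁) →
        (∀ a ∈ Set.Icc a₀ (a₀ + δ₀), ∀ x ∈ Rect d lo hi, ‖fx a x‖ ≤ B₂) →
        (∀ a ∈ Set.Icc a₀ (a₀ + δ₀), ∀ x ∈ Rect d lo hi, ‖fax a x‖ ≤ B₃) →
        (∀ a ∈ Set.Icc a₀ (a₀ + δ₀), ∀ x ∈ Rect d lo hi, ∀ k l, |fxx a x k l| ≤ B₄) →
        ∀ a ∈ Set.Icc a₀ (a₀ + δ₀), ∀ a' ∈ Set.Icc a₀ (a₀ + δ₀),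
          0 < |a' - a| → |a' - a| ≤ ε →
          ∀ x₁ ∈ Rect d lo hi,
            C * |a' - a| ≤ Metric.infDist x₁ (frontier (Rect d lo hi)) →
            ∃ u : EuclideanSpace ℝ (Fin d),
              ‖u‖ ≤ C * |a' - a| ∧ x₁ - u ∈ Rect d lo hi ∧
              fx a' (x₁ - u) = fx a x₁ := by
  classical
  open TangencyAux in
  set K₁ : ℝ := d * d.factorial * (max 1 B₄)^d * max (1/c₀) 1 with hK₁def
  have hd0 : (0:ℝ) < d := by exact_mod_cast hd
  have hK₁pos : 0 < K₁ := by
    apply mul_pos (mul_pos (mul_pos hd0 (by positivity)) _) _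
    · exact pow_pos (lt_of_lt_of_le one_pos (le_max_left _ _)) d
    · exact lt_of_lt_of_le one_pos (le_max_right _ _)
  set C : ℝ := 2 * K₁ * max B₃ 0 + 1 with hCdef
  have hCpos : 0 < C := by positivity
  set K₂ : ℝ := d * Cα * K₁ with hK₂def
  set b : ℝ := min (1/2 : ℝ) ((2 * max K₂ 1)⁻¹) with hbdef
  have hmaxK₂ : (0:ℝ) < max K₂ 1 := lt_of_lt_of_le one_pos (le_max_right _ _)
  have hbpos : 0 < b := lt_min (by norm_num) (by positivity)
  set ε : ℝ := b ^ ((1:ℝ)/α) / max C 1 with hεdef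
  have hεpos : 0 < ε := div_pos (Real.rpow_pos_of_pos hbpos _)
    (lt_of_lt_of_le one_pos (le_max_right _ _))
  refine ⟨ε, hεpos, C, hCpos, ?_⟩
  intro a₀ δ₀ lo hi f fa fx fax fxx hreg hB₁ hB₂ hB₃ hB₄ a ha a' ha' hhpos hhle x₁ hx₁ hinf
  set s := Rect d lo hi with hsdef
  set I := Set.Icc a₀ (a₀ + δ₀) with hIdef
  set h : ℝ := |a' - a| with hhdef
  set r : ℝ := C * h with hrdef
  have hα := hreg.α_mem
  have hrpos : 0 < r := mul_pos hCpos hhpos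
  have hcoord : ∀ i, lo i + r ≤ x₁ i ∧ x₁ i ≤ hi i - r :=
    fun i => coord_bounds_of_infDist hreg.rect_pos hx₁ hinf i
  have hball : Metric.closedBall x₁ r ⊆ s := closedBall_subset_rect hcoord
  -- contraction modulus bound
  have hrb : r ^ α ≤ b := by
    have hCle : C / max C 1 ≤ 1 := div_le_one_of_le₀ (le_max_left _ _) (by positivity)
    have hrle : r ≤ b ^ ((1:ℝ)/α) := by
      calc r = C * h := rfl
        _ ≤ C * ε := mul_le_mul_of_nonneg_left hhle hCpos.le
        _ = b ^ ((1:ℝ)/α) * (C / max C 1) := by rw [hεdef]; ring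
        _ ≤ b ^ ((1:ℝ)/α) * 1 := by
            exact mul_le_mul_of_nonneg_left hCle (Real.rpow_pos_of_pos hbpos _).le
        _ = b ^ ((1:ℝ)/α) := mul_one _
    calc r ^ α ≤ (b ^ ((1:ℝ)/α)) ^ α :=
          Real.rpow_le_rpow hrpos.le hrle hα.1.le
      _ = b ^ (((1:ℝ)/α) * α) := by rw [← Real.rpow_mul hbpos.le]
      _ = b := by
          rw [one_div, inv_mul_cancel₀ (ne_of_gt hα.1), Real.rpow_one]
  have hcontr : K₂ * r ^ α ≤ 1/2 := by
    have h1 : K₂ * r ^ α ≤ max K₂ 1 * b :=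
      mul_le_mul (le_max_left _ _) hrb (Real.rpow_nonneg hrpos.le _) hmaxK₂.le
    have h2 : max K₂ 1 * b ≤ max K₂ 1 * (2 * max K₂ 1)⁻¹ :=
      mul_le_mul_of_nonneg_left (min_le_right _ _) hmaxK₂.le
    have h3 : max K₂ 1 * (2 * max K₂ 1)⁻¹ = 1/2 := by
      field_simp
    linarith
  -- step 1 : Lipschitz bound on g := f a' - f a
  have hB₃0 : 0 ≤ B₃ := le_trans (norm_nonneg _) (hB₃ a ha x₁ hx₁)
  have hfaLip : ∀ t ∈ I, ∀ x ∈ s, ∀ y ∈ s, ‖fa t x - fa t y‖ ≤ B₃ * ‖x - y‖ := by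
    intro t ht x hx y hy
    exact Convex.norm_image_sub_le_of_norm_hasFDerivWithin_le
      (fun z hz => (hreg.hasGrad_ax t ht z hz).hasFDerivWithinAt)
      (fun z hz => by
        rw [show ‖(InnerProductSpace.toDual ℝ (EuclideanSpace ℝ (Fin d)) (fax t z) :
          EuclideanSpace ℝ (Fin d) →L[ℝ] ℝ)‖ = ‖fax t z‖ from
            (InnerProductSpace.toDual ℝ (EuclideanSpace ℝ (Fin d))).norm_map _]
        exact hB₃ t ht z hz) convex_rect hy hx
  have hLip : ∀ x ∈ s, ∀ y ∈ s,
      ‖(f a' x - f a x) - (f a' y - f a y)‖ ≤ B₃ * ‖x - y‖ * h := by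
    intro x hx y hy
    have hψ : ∀ t ∈ I, HasDerivWithinAt (fun t => f t x - f t y) (fa t x - fa t y) I t :=
      fun t ht => (hreg.hasDeriv_a t ht x hx).sub (hreg.hasDeriv_a t ht y hy)
    have := Convex.norm_image_sub_le_of_norm_hasDerivWithin_le hψ
      (fun t ht => hfaLip t ht x hx y hy) (convex_Icc _ _) ha ha'
    calc ‖(f a' x - f a x) - (f a' y - f a y)‖
        = ‖(f a' x - f a' y) - (f a x - f a y)‖ := by ring_nf
      _ ≤ B₃ * ‖x - y‖ * ‖a' - a‖ := this
      _ = B₃ * ‖x - y‖ * h := by rw [hhdef, Real.norm_eq_abs]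
  -- step 2 : the gradient difference at x₁ is small
  set w : EuclideanSpace ℝ (Fin d) := fx a' x₁ - fx a x₁ with hwdef
  have hw : ‖w‖ ≤ B₃ * h := by
    by_cases hw0 : w = 0
    · rw [hw0, norm_zero]
      positivity
    · set v : EuclideanSpace ℝ (Fin d) := ‖w‖⁻¹ • w with hvdef
      have hnw : (0:ℝ) < ‖w‖ := norm_pos_iff.2 hw0
      have hv1 : ‖v‖ = 1 := by
        rw [hvdef, norm_smul, norm_inv, norm_norm, inv_mul_cancel₀ (ne_of_gt hnw)]
      have hmem : ∀ t ∈ Set.Icc (0:ℝ) r, x₁ + t • v ∈ s := by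
        intro t ht
        apply hball
        rw [Metric.mem_closedBall, dist_eq_norm]
        rw [show x₁ + t • v - x₁ = t • v by abel]
        rw [norm_smul, hv1, mul_one, Real.norm_eq_abs, abs_of_nonneg ht.1]
        exact ht.2
      set D : EuclideanSpace ℝ (Fin d) →L[ℝ] ℝ :=
        (InnerProductSpace.toDual ℝ (EuclideanSpace ℝ (Fin d)) (fx a' x₁) :
          EuclideanSpace ℝ (Fin d) →L[ℝ] ℝ) -
        (InnerProductSpace.toDual ℝ (EuclideanSpace ℝ (Fin d)) (fx a x₁) :
          EuclideanSpace ℝ (Fin d) →L[ℝ] ℝ) with hDdef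
      have hg : HasFDerivWithinAt (fun z => f a' z - f a z) D s x₁ :=
        (hreg.hasGrad_x a' ha' x₁ hx₁).hasFDerivWithinAt.sub
          (hreg.hasGrad_x a ha x₁ hx₁).hasFDerivWithinAt
      have hline : HasDerivWithinAt (fun t : ℝ => x₁ + t • v) v (Set.Icc (0:ℝ) r) 0 := by
        have h1 : HasDerivAt (fun t : ℝ => t • v) ((1:ℝ) • v) 0 :=
          (hasDerivAt_id (0:ℝ)).smul_const v
        rw [one_smul] at h1
        exact (h1.const_add x₁).hasDerivWithinAt
      have hφ : HasDerivWithinAt (fun t : ℝ => f a' (x₁ + t • v) - f a (x₁ + t • v))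
          (D v) (Set.Icc (0:ℝ) r) 0 := by
        have hg' : HasFDerivWithinAt (fun z => f a' z - f a z) D s
            ((fun t : ℝ => x₁ + t • v) 0) := by
          rw [show (fun t : ℝ => x₁ + t • v) 0 = x₁ by simp]
          exact hg
        exact hg'.comp_hasDerivWithinAt 0 hline (fun t ht => hmem t ht)
      have habs : |D v| ≤ B₃ * h := by
        apply abs_deriv_le_of_lip hrpos hφ
        intro t ht
        simp only [zero_smul, add_zero]
        have := hLip (x₁ + t • v) (hmem t ht) (x₁ + (0:ℝ) • v) (hmem 0 ⟨le_refl _, hrpos.le⟩)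
        rw [show x₁ + (0:ℝ) • v = x₁ by simp] at this
        rw [show x₁ + t • v - x₁ = t • v by abel] at this
        rw [norm_smul, hv1, mul_one, Real.norm_eq_abs t, abs_of_nonneg ht.1] at this
        calc |(f a' (x₁ + t • v) - f a (x₁ + t • v)) - (f a' x₁ - f a x₁)| ≤ B₃ * t * h :=
              this
          _ = B₃ * h * t := by ring
      have hDv : D v = ‖w‖ := by
        rw [hDdef]
        simp only [ContinuousLinearMap.sub_apply, ContinuousLinearMap.coe_coe,
          InnerProductSpace.toDual_apply_apply]
        rw [← inner_sub_left, ← hwdef, hvdef, real_inner_smul_right,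
          real_inner_self_eq_norm_sq]
        field_simp
      rw [hDv, abs_of_nonneg hnw.le] at habs
      exact habs
  -- step 3 : matrix inverse bounds
  set N := fxx a' x₁ with hNdef
  have hdetN : c₀ ≤ |N.det| := hreg.curved a' ha' x₁ hx₁
  have hNunit : IsUnit N.det := by
    apply isUnit_iff_ne_zero.2
    intro h0
    rw [h0, abs_zero] at hdetN
    linarith [hreg.c₀_pos]
  have hinv_entry : ∀ k l, |N⁻¹ k l| ≤ (1/c₀) * (d.factorial * (max 1 B₄) ^ d) :=
    inv_entry_le hreg.c₀_pos hdetN (hB₄ a' ha' x₁ hx₁)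
  set T := matCLM d N with hTdef
  set Sm := matCLM d N⁻¹ with hSmdef
  have hSnorm : ‖Sm‖ ≤ K₁ := by
    have hb1 : (0:ℝ) ≤ (1/c₀) * (d.factorial * (max 1 B₄) ^ d) := by
      have := hreg.c₀_pos
      positivity
    refine le_trans (matCLM_norm_le hb1 hinv_entry) ?_
    rw [hK₁def]
    have h1c : 1/c₀ ≤ max (1/c₀) 1 := le_max_left _ _
    have hfac : (0:ℝ) ≤ (d.factorial : ℝ) * (max 1 B₄)^d := by positivity
    calc (d:ℝ) * ((1/c₀) * (d.factorial * (max 1 B₄) ^ d))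
        ≤ (d:ℝ) * (max (1/c₀) 1 * (d.factorial * (max 1 B₄) ^ d)) := by
          apply mul_le_mul_of_nonneg_left _ hd0.le
          exact mul_le_mul_of_nonneg_right h1c hfac
      _ = (d:ℝ) * d.factorial * (max 1 B₄)^d * max (1/c₀) 1 := by ring
  have hST : ∀ z, Sm (T z) = z := by
    intro z
    rw [hTdef, hSmdef, matCLM_comp, Matrix.mul_nonsing_inv N hNunit, matCLM_one]
  have hTS : ∀ z, T (Sm z) = z := by
    intro z
    rw [hTdef, hSmdef, matCLM_comp, Matrix.nonsing_inv_mul N hNunit, matCLM_one]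
  -- step 4 : mean value estimate for fx a' near x₁
  have hGfd : ∀ y ∈ Metric.closedBall x₁ r,
      HasFDerivWithinAt (fx a') (matCLM d (fxx a' y)) (Metric.closedBall x₁ r) y :=
    fun y hy => (hasFDeriv_matCLM
      (fun l => hreg.hasHessian a' ha' y (hball hy) l)).mono hball
  have hGbound : ∀ y ∈ Metric.closedBall x₁ r,
      ‖matCLM d (fxx a' y) - T‖ ≤ d * (Cα * r ^ α) := by
    intro y hy
    rw [hTdef, matCLM_sub]
    have hCαr : (0:ℝ) ≤ Cα * r ^ α := by
      have := hreg.Cα_pos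
      have := Real.rpow_nonneg hrpos.le α
      positivity
    apply matCLM_norm_le hCαr
    intro k l
    rw [Matrix.sub_apply]
    refine le_trans (hreg.hess_holder a' ha' y (hball hy) x₁ hx₁ k l) ?_
    apply mul_le_mul_of_nonneg_left _ hreg.Cα_pos.le
    apply Real.rpow_le_rpow (norm_nonneg _) _ hα.1.le
    rw [← dist_eq_norm]
    exact hy
  have hMVT : ∀ u ∈ Metric.closedBall (0:EuclideanSpace ℝ (Fin d)) r,
      ∀ u' ∈ Metric.closedBall (0:EuclideanSpace ℝ (Fin d)) r,
      ‖fx a' (x₁ - u) - fx a' (x₁ - u') - T ((x₁ - u) - (x₁ - u'))‖ ≤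
        (d * (Cα * r ^ α)) * ‖(x₁ - u) - (x₁ - u')‖ := by
    intro u hu u' hu'
    have hmemu : x₁ - u ∈ Metric.closedBall x₁ r := by
      rw [Metric.mem_closedBall, dist_eq_norm, show x₁ - u - x₁ = -u by abel, norm_neg]
      exact mem_closedBall_zero_iff.1 hu
    have hmemu' : x₁ - u' ∈ Metric.closedBall x₁ r := by
      rw [Metric.mem_closedBall, dist_eq_norm, show x₁ - u' - x₁ = -u' by abel, norm_neg]
      exact mem_closedBall_zero_iff.1 hu'
    exact Convex.norm_image_sub_le_of_norm_hasFDerivWithin_le' hGfd hGbound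
      (convex_closedBall x₁ r) hmemu' hmemu
  -- step 5 : contraction
  set v₁ := fx a x₁ with hv₁def
  set Φ : EuclideanSpace ℝ (Fin d) → EuclideanSpace ℝ (Fin d) :=
    fun u => u + Sm (fx a' (x₁ - u) - v₁) with hΦdef
  have hΦcontr : ∀ u ∈ Metric.closedBall (0:EuclideanSpace ℝ (Fin d)) r,
      ∀ u' ∈ Metric.closedBall (0:EuclideanSpace ℝ (Fin d)) r,
      ‖Φ u - Φ u'‖ ≤ (1/2) * ‖u - u'‖ := by
    intro u hu u' hu'
    have hkey : Φ u - Φ u' =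
        Sm (fx a' (x₁ - u) - fx a' (x₁ - u') - T ((x₁ - u) - (x₁ - u'))) := by
      have hTD : Sm (T ((x₁ - u) - (x₁ - u'))) = (x₁ - u) - (x₁ - u') := hST _
      rw [hΦdef]
      simp only
      rw [map_sub Sm (fx a' (x₁ - u) - fx a' (x₁ - u')) (T ((x₁ - u) - (x₁ - u'))), hTD,
        map_sub Sm (fx a' (x₁ - u)) (fx a' (x₁ - u')),
        map_sub Sm (fx a' (x₁ - u)) v₁, map_sub Sm (fx a' (x₁ - u')) v₁]
      abel
    rw [hkey]
    calc ‖Sm (fx a' (x₁ - u) - fx a' (x₁ - u') - T ((x₁ - u) - (x₁ - u')))‖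
        ≤ ‖Sm‖ * ‖fx a' (x₁ - u) - fx a' (x₁ - u') - T ((x₁ - u) - (x₁ - u'))‖ :=
          Sm.le_opNorm _
      _ ≤ K₁ * ((d * (Cα * r ^ α)) * ‖(x₁ - u) - (x₁ - u')‖) := by
          apply mul_le_mul hSnorm (hMVT u hu u' hu') (norm_nonneg _) hK₁pos.le
      _ = (K₂ * r ^ α) * ‖(x₁ - u) - (x₁ - u')‖ := by rw [hK₂def]; ring
      _ = (K₂ * r ^ α) * ‖u - u'‖ := by
          rw [show (x₁ - u) - (x₁ - u') = u' - u by abel, norm_sub_rev]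
      _ ≤ (1/2) * ‖u - u'‖ := mul_le_mul_of_nonneg_right hcontr (norm_nonneg _)
  have hΦ0 : ‖Φ 0‖ ≤ (C - 1)/2 * h := by
    have : Φ 0 = Sm w := by
      rw [hΦdef]
      simp only
      rw [sub_zero, ← hwdef, zero_add]
    rw [this]
    calc ‖Sm w‖ ≤ ‖Sm‖ * ‖w‖ := Sm.le_opNorm _
      _ ≤ K₁ * (B₃ * h) := mul_le_mul hSnorm hw (norm_nonneg _) hK₁pos.le
      _ ≤ K₁ * (max B₃ 0 * h) := by
          apply mul_le_mul_of_nonneg_left _ hK₁pos.le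
          exact mul_le_mul_of_nonneg_right (le_max_left _ _) (abs_nonneg _)
      _ = (C - 1)/2 * h := by rw [hCdef]; ring
  have hmaps : Set.MapsTo Φ (Metric.closedBall (0:EuclideanSpace ℝ (Fin d)) r)
      (Metric.closedBall (0:EuclideanSpace ℝ (Fin d)) r) := by
    intro u hu
    rw [Metric.mem_closedBall, dist_zero_right]
    have h0mem : (0:EuclideanSpace ℝ (Fin d)) ∈ Metric.closedBall
        (0:EuclideanSpace ℝ (Fin d)) r := Metric.mem_closedBall_self hrpos.le
    have h1 : ‖Φ u‖ ≤ ‖Φ u - Φ 0‖ + ‖Φ 0‖ := by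
      calc ‖Φ u‖ = ‖(Φ u - Φ 0) + Φ 0‖ := by rw [sub_add_cancel]
        _ ≤ ‖Φ u - Φ 0‖ + ‖Φ 0‖ := norm_add_le _ _
    have h2 : ‖Φ u - Φ 0‖ ≤ (1/2) * ‖u‖ := by
      have := hΦcontr u hu 0 h0mem
      rwa [sub_zero] at this
    have h3 : ‖u‖ ≤ r := mem_closedBall_zero_iff.1 hu
    have h4 : (C - 1)/2 * h ≤ C/2 * h := by nlinarith [hhpos]
    calc ‖Φ u‖ ≤ (1/2) * ‖u‖ + (C - 1)/2 * h := by linarith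
      _ ≤ (1/2) * r + (C - 1)/2 * h := by linarith
      _ = C * h - h/2 := by rw [hrdef]; ring
      _ ≤ C * h := by linarith
      _ = r := hrdef.symm
  -- step 6 : Banach fixed point
  have hsc : IsComplete (Metric.closedBall (0:EuclideanSpace ℝ (Fin d)) r) :=
    Metric.isClosed_closedBall.isComplete
  have hlip : LipschitzOnWith (1/2 : NNReal) Φ
      (Metric.closedBall (0:EuclideanSpace ℝ (Fin d)) r) := by
    apply LipschitzOnWith.of_dist_le_mul
    intro x hx y hy
    rw [dist_eq_norm, dist_eq_norm]
    have := hΦcontr x hx y hy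
    calc ‖Φ x - Φ y‖ ≤ (1/2) * ‖x - y‖ := this
      _ = ((1/2 : NNReal) : ℝ) * ‖x - y‖ := by norm_num
  have hcw : ContractingWith (1/2 : NNReal) (hmaps.restrict Φ _ _) :=
    ⟨by exact_mod_cast (show (1:ℝ)/2 < 1 by norm_num), hlip.mapsToRestrict hmaps⟩
  obtain ⟨u, hu_mem, hufix, -, -⟩ := hcw.exists_fixedPoint' hsc hmaps
    (Metric.mem_closedBall_self hrpos.le) (edist_ne_top _ _)
  refine ⟨u, ?_, ?_, ?_⟩
  · exact mem_closedBall_zero_iff.1 hu_mem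
  · apply hball
    rw [Metric.mem_closedBall, dist_eq_norm, show x₁ - u - x₁ = -u by abel, norm_neg]
    exact mem_closedBall_zero_iff.1 hu_mem
  · have hfix : u + Sm (fx a' (x₁ - u) - v₁) = u := hufix
    have h0 : Sm (fx a' (x₁ - u) - v₁) = 0 := add_eq_left.1 hfix
    have h1 : fx a' (x₁ - u) - v₁ = 0 := by
      have := hTS (fx a' (x₁ - u) - v₁)
      rw [h0, map_zero] at this
      exact this.symm
    rw [hv₁def] at h1
    exact sub_eq_zero.1 h1
end
end

section
/- Let d ≥ 1, let R₀ = ∏_{i=1}^d I_i ⊆ ℝ^d be a compact rectangle, and let f be a regular curved function on [a₀, a₀+δ₀] × R₀ with data (c₀, α, C_α, η, A_η) and sup-norm bounds B₁ ≥ ‖∂_a f‖_∞, B₂ ≥ ‖∇_x f‖_∞, B₃ ≥ ‖∇_x ∂_a f‖_∞, B₄ ≥ ‖D²_x f‖_∞. Assume in addition that the mixed derivative is Hölder in x: |∇_x ∂_a f(a,x) − ∇_x ∂_a f(a,x')| ≤ C_α |x − x'|^α for all a ∈ [a₀, a₀+δ₀] and x, x' ∈ R₀. Fix a ∈ [a₀,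 a₀+δ₀] and x₀ ∈ R₀, and define g : R₀ → ℝ by g(x) := ∂_a f(a,x) − ⟨(D²_x f(a,x₀))^{−1} ∇_x ∂_a f(a,x₀), ∇_x f(a,x)⟩. Then: (1) the gradient of g vanishes at x₀, i.e. ∇g(x₀) = 0; (2) there exists a constant C depending only on d, c₀, α, C_α, B₃, B₄ such that |g(x) − g(x₀)| ≤ C |x − x₀|^{1+α} for all x ∈ R₀. -/
set_option maxHeartbeats 1000000


open MeasureTheory Metric Set

noncomputable section

lemma euc_norm_le_sum_abs {d : ℕ} (x : EuclideanSpace ℝ (Fin d)) : ‖x‖ ≤ ∑ i, |x i| := by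
  rw [EuclideanSpace.norm_eq]
  rw [show (∑ i, |x i|) = Real.sqrt ((∑ i, |x i|)^2) from
    (Real.sqrt_sq (Finset.sum_nonneg fun i _ => abs_nonneg _)).symm]
  apply Real.sqrt_le_sqrt
  rw [sq, Finset.sum_mul_sum]
  calc ∑ i, ‖x i‖ ^ 2 = ∑ i, |x i| * |x i| := by
        simp [sq, Real.norm_eq_abs]
    _ ≤ ∑ i, ∑ j, |x i| * |x j| := by
        apply Finset.sum_le_sum
        intro i _
        have : |x i| * |x i| ≤ |x i| * ∑ j, |x j| := by
          apply mul_le_mul_of_nonneg_left _ (abs_nonneg _)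
          exact Finset.single_le_sum (fun j _ => abs_nonneg (x j)) (Finset.mem_univ i)
        simpa [Finset.mul_sum] using this

lemma euc_abs_le_norm {d : ℕ} (x : EuclideanSpace ℝ (Fin d)) (i : Fin d) : |x i| ≤ ‖x‖ := by
  rw [EuclideanSpace.norm_eq, show |x i| = Real.sqrt (|x i|^2) from (Real.sqrt_sq (abs_nonneg _)).symm]
  apply Real.sqrt_le_sqrt
  rw [sq_abs]
  have := Finset.single_le_sum (f := fun j => ‖x j‖ ^ 2) (fun j _ => sq_nonneg _) (Finset.mem_univ i)
  simpa [Real.norm_eq_abs, sq_abs] using this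

lemma det_abs_le {d : ℕ} (N : Matrix (Fin d) (Fin d) ℝ) {b : ℝ} (hb : 0 ≤ b)
    (h : ∀ i j, |N i j| ≤ b) : |N.det| ≤ (d.factorial : ℝ) * b ^ d := by
  rw [Matrix.det_apply']
  calc |∑ σ : Equiv.Perm (Fin d), (Equiv.Perm.sign σ : ℝ) * ∏ i, N (σ i) i|
      ≤ ∑ σ : Equiv.Perm (Fin d), |(Equiv.Perm.sign σ : ℝ) * ∏ i, N (σ i) i| :=
        Finset.abs_sum_le_sum_abs _ _
    _ ≤ ∑ _σ : Equiv.Perm (Fin d), b ^ d := by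
        apply Finset.sum_le_sum
        intro σ _
        rw [abs_mul]
        have h1 : |(Equiv.Perm.sign σ : ℝ)| = 1 := by
          rcases Int.units_eq_one_or (Equiv.Perm.sign σ) with h' | h' <;> simp [h']
        rw [h1, one_mul, Finset.abs_prod]
        calc ∏ i, |N (σ i) i| ≤ ∏ _i : Fin d, b := Finset.prod_le_prod
              (fun i _ => abs_nonneg _) (fun i _ => h _ _)
          _ = b ^ d := by simp
    _ = (d.factorial : ℝ) * b ^ d := by
        simp [Finset.sum_const, Fintype.card_perm]

lemma inv_entry_bound {d : ℕ} (M : Matrix (Fin d) (Fin d) ℝ) {b c₀ : ℝ} (hb : 1 ≤ b)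
    (hc : 0 < c₀) (hdet : c₀ ≤ |M.det|) (h : ∀ i j, |M i j| ≤ b) (i j : Fin d) :
    |M⁻¹ i j| ≤ (d.factorial : ℝ) * b ^ d / c₀ := by
  have hb0 : (0:ℝ) ≤ b := le_trans zero_le_one hb
  have hadj : |M.adjugate i j| ≤ (d.factorial : ℝ) * b ^ d := by
    rw [Matrix.adjugate_apply]
    apply det_abs_le _ hb0
    intro k l
    rw [Matrix.updateRow_apply]
    split
    · rcases eq_or_ne l i with h' | h' <;> simp [Pi.single_apply, h', hb, hb0]
    · exact h k l
  rw [Matrix.inv_def, Ring.inverse_eq_inv']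
  rw [Matrix.smul_apply, smul_eq_mul, abs_mul, abs_inv]
  rw [div_eq_inv_mul]
  apply mul_le_mul _ hadj (abs_nonneg _) (by positivity)
  exact inv_anti₀ hc hdet

lemma convex_Rect (d : ℕ) (lo hi : Fin d → ℝ) : Convex ℝ (Rect d lo hi) := by
  intro x hx y hy p q hp hq hpq i
  have h : (p • x + q • y) i = p * x i + q * y i := by
    simp [PiLp.add_apply, PiLp.smul_apply, smul_eq_mul]
  rw [h]
  exact convex_Icc (lo i) (hi i) (hx i) (hy i) hp hq hpq

lemma seg_norm_le {d : ℕ} {x₀ x z : EuclideanSpace ℝ (Fin d)} (hz : z ∈ segment ℝ x₀ x) :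
    ‖z - x₀‖ ≤ ‖x - x₀‖ := by
  obtain ⟨p, q, hp, hq, hpq, rfl⟩ := hz
  have h : p • x₀ + q • x - x₀ = q • (x - x₀) := by
    have : p = 1 - q := by linarith
    subst this
    module
  rw [h, norm_smul, Real.norm_eq_abs, abs_of_nonneg hq]
  exact mul_le_of_le_one_left (norm_nonneg _) (by linarith)

lemma grad_combine {d : ℕ} (s : Set (EuclideanSpace ℝ (Fin d))) (y : EuclideanSpace ℝ (Fin d))
    (fa : EuclideanSpace ℝ (Fin d) → ℝ) (fx : EuclideanSpace ℝ (Fin d) → EuclideanSpace ℝ (Fin d))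
    (fax : EuclideanSpace ℝ (Fin d)) (fxx : Matrix (Fin d) (Fin d) ℝ) (v : Fin d → ℝ)
    (h1 : HasGradientWithinAt fa fax s y)
    (h2 : ∀ l, HasGradientWithinAt (fun z => fx z l)
      ((WithLp.equiv 2 (Fin d → ℝ)).symm fun k => fxx k l) s y) :
    HasGradientWithinAt (fun z => fa z - ∑ k, v k * fx z k)
      ((WithLp.equiv 2 (Fin d → ℝ)).symm fun j => fax j - ∑ l, v l * fxx j l) s y := by
  rw [hasGradientWithinAt_iff_hasFDerivWithinAt]
  have h1' := hasGradientWithinAt_iff_hasFDerivWithinAt.mp h1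
  have h2' : ∀ l : Fin d, HasFDerivWithinAt (fun z => v l * fx z l)
      (v l • (InnerProductSpace.toDual ℝ (EuclideanSpace ℝ (Fin d))
        ((WithLp.equiv 2 (Fin d → ℝ)).symm fun k => fxx k l))) s y :=
    fun l => (hasGradientWithinAt_iff_hasFDerivWithinAt.mp (h2 l)).const_mul (v l)
  have h3 := HasFDerivWithinAt.sum (fun l (_ : l ∈ Finset.univ) => h2' l)
  have h4 := h1'.sub h3
  have hfun : (fun z => fa z - ∑ k, v k * fx z k) = fa - ∑ i, fun z => v i * fx z i := by
    ext z; simp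
  rw [hfun]
  refine h4.congr_fderiv ?_
  ext z
  simp only [InnerProductSpace.toDual_apply_apply, PiLp.inner_apply, RCLike.inner_apply,
    starRingEnd_apply, star_trivial, WithLp.equiv_symm_apply, PiLp.toLp_apply,
    ContinuousLinearMap.sub_apply, ContinuousLinearMap.sum_apply,
    ContinuousLinearMap.smul_apply, smul_eq_mul, sub_mul, Finset.sum_sub_distrib,
    Finset.sum_mul, Finset.mul_sum]
  simp only [mul_sub, Finset.sum_sub_distrib, Finset.mul_sum]
  congr 1
  rw [Finset.sum_comm]
  refine Finset.sum_congr rfl fun x _ => Finset.sum_congr rfl fun x_1 _ => ?_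
  ring_nf


/-- **Key pointwise Hölder estimate (used in the measure bound of Proposition 2.1).**
Assume in addition that `∇ₓ ∂ₐ f` is `α`-Hölder in `x`.  Fix `a` and `x₀ ∈ R₀` and set
`g(x) := ∂ₐ f(a,x) - ⟨(D²ₓ f(a,x₀))⁻¹ ∇ₓ∂ₐ f(a,x₀), ∇ₓ f(a,x)⟩`.
Then `∇g(x₀) = 0`, and `|g(x) - g(x₀)| ≤ C |x - x₀|^{1+α}` with `C` depending only on
`d, c₀, α, Cα, B₃, B₄`. -/
theorem critical_point_holder_estimate (d : ℕ) (hd : 1 ≤ d) (c₀ α Cα B₃ B₄ : ℝ) :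
    ∃ C : ℝ, 0 < C ∧
      ∀ (η Aη B₁ B₂ : ℝ) (a₀ δ₀ : ℝ) (lo hi : Fin d → ℝ)
        (f fa : ℝ → EuclideanSpace ℝ (Fin d) → ℝ)
        (fx fax : ℝ → EuclideanSpace ℝ (Fin d) → EuclideanSpace ℝ (Fin d))
        (fxx : ℝ → EuclideanSpace ℝ (Fin d) → Matrix (Fin d) (Fin d) ℝ),
        IsRegularCurvedFunction d a₀ δ₀ lo hi f fa fx fax fxx c₀ α Cα η Aη →
        (∀ a ∈ Set.Icc a₀ (a₀ + δ₀), ∀ x ∈ Rect d lo hi, |fa a x| ≤ B₁) →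
        (∀ a ∈ Set.Icc a₀ (a₀ + δ₀), ∀ x ∈ Rect d lo hi, ‖fx a x‖ ≤ B₂) →
        (∀ a ∈ Set.Icc a₀ (a₀ + δ₀), ∀ x ∈ Rect d lo hi, ‖fax a x‖ ≤ B₃) →
        (∀ a ∈ Set.Icc a₀ (a₀ + δ₀), ∀ x ∈ Rect d lo hi, ∀ k l, |fxx a x k l| ≤ B₄) →
        -- additional hypothesis: the mixed derivative `∇ₓ ∂ₐ f` is `α`-Hölder in `x`
        (∀ a ∈ Set.Icc a₀ (a₀ + δ₀), ∀ x ∈ Rect d lo hi, ∀ x' ∈ Rect d lo hi,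
          ‖fax a x - fax a x'‖ ≤ Cα * ‖x - x'‖ ^ α) →
        ∀ a ∈ Set.Icc a₀ (a₀ + δ₀), ∀ x₀ ∈ Rect d lo hi,
          -- the function `g`
          (HasGradientWithinAt
            (fun x => fa a x - ∑ k, ((fxx a x₀)⁻¹.mulVec fun k => fax a x₀ k) k * fx a x k)
            0 (Rect d lo hi) x₀) ∧
          (∀ x ∈ Rect d lo hi,
            |(fa a x - ∑ k, ((fxx a x₀)⁻¹.mulVec fun k => fax a x₀ k) k * fx a x k) -
             (fa a x₀ - ∑ k, ((fxx a x₀)⁻¹.mulVec fun k => fax a x₀ k) k * fx a x₀ k)| ≤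
              C * ‖x - x₀‖ ^ (1 + α)) := by
  set b : ℝ := max |B₄| 1 with hb_def
  have hb1 : (1:ℝ) ≤ b := le_max_right _ _
  have hb0 : (0:ℝ) ≤ b := by linarith
  refine ⟨1 + |Cα| * (1 + (d:ℝ)^2 * ((d:ℝ) * ((d.factorial : ℝ) * b ^ d / |c₀|) * |B₃|)),
    ?_, ?_⟩
  · have h0 : (0:ℝ) ≤ |Cα| * (1 + (d:ℝ)^2 * ((d:ℝ) * ((d.factorial : ℝ) * b ^ d / |c₀|) * |B₃|)) := by
      positivity
    linarith
  intro η Aη B₁ B₂ a₀ δ₀ lo hi f fa fx fax fxx hreg hB₁ hB₂ hB₃ hB₄ hmix a ha x₀ hx₀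
  have hCα := hreg.Cα_pos
  have hc₀ := hreg.c₀_pos
  have hα := hreg.α_mem
  set s := Rect d lo hi with hs_def
  set M := fxx a x₀ with hM_def
  set v : Fin d → ℝ := M⁻¹.mulVec (fun k => fax a x₀ k) with hv_def
  set Vb : ℝ := (d:ℝ) * ((d.factorial : ℝ) * b ^ d / c₀) * B₃ with hVb_def
  set K : ℝ := Cα * (1 + (d:ℝ)^2 * Vb) with hK_def
  have hdet : c₀ ≤ |M.det| := hreg.curved a ha x₀ hx₀
  have hMent : ∀ k l, |M k l| ≤ b :=
    fun k l => (hB₄ a ha x₀ hx₀ k l).trans ((le_abs_self B₄).trans (le_max_left _ _))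
  have hB₃0 : 0 ≤ B₃ := le_trans (norm_nonneg _) (hB₃ a ha x₀ hx₀)
  have hinv : ∀ i j, |M⁻¹ i j| ≤ (d.factorial : ℝ) * b ^ d / c₀ :=
    inv_entry_bound M hb1 hc₀ hdet hMent
  have hw : ∀ k, |fax a x₀ k| ≤ B₃ :=
    fun k => (euc_abs_le_norm (fax a x₀) k).trans (hB₃ a ha x₀ hx₀)
  have hfac : (0:ℝ) ≤ (d.factorial : ℝ) * b ^ d / c₀ := by positivity
  have hvb : ∀ l, |v l| ≤ Vb := by
    intro l
    rw [hv_def]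
    simp only [Matrix.mulVec, dotProduct]
    calc |∑ k, M⁻¹ l k * fax a x₀ k| ≤ ∑ k, |M⁻¹ l k * fax a x₀ k| :=
          Finset.abs_sum_le_sum_abs _ _
      _ ≤ ∑ _k : Fin d, ((d.factorial : ℝ) * b ^ d / c₀) * B₃ := by
          apply Finset.sum_le_sum
          intro k _
          rw [abs_mul]
          exact mul_le_mul (hinv l k) (hw k) (abs_nonneg _) hfac
      _ = Vb := by
          rw [hVb_def]; simp [Finset.sum_const]; ring
  have hVb0 : 0 ≤ Vb := le_trans (abs_nonneg _) (hvb ⟨0, hd⟩)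
  have hK0 : 0 ≤ K := by
    rw [hK_def]
    have : (0:ℝ) ≤ (d:ℝ)^2 * Vb := by positivity
    nlinarith
  set G : EuclideanSpace ℝ (Fin d) → EuclideanSpace ℝ (Fin d) :=
    fun y => (WithLp.equiv 2 (Fin d → ℝ)).symm fun j => fax a y j - ∑ l, v l * fxx a y j l
    with hG_def
  have hgrad : ∀ y ∈ s, HasGradientWithinAt
      (fun z => fa a z - ∑ k, v k * fx a z k) (G y) s y := by
    intro y hy
    exact grad_combine s y (fa a) (fx a) (fax a y) (fxx a y) v
      (hreg.hasGrad_ax a ha y hy) (fun l => hreg.hasHessian a ha y hy l)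
  have hunit : IsUnit M.det := by
    rw [isUnit_iff_ne_zero]
    intro h
    rw [h, abs_zero] at hdet
    linarith
  have hMv : ∀ j, ∑ l, v l * M j l = fax a x₀ j := by
    have hMv' : M.mulVec v = (fun k => fax a x₀ k) := by
      rw [hv_def, Matrix.mulVec_mulVec, Matrix.mul_nonsing_inv _ hunit, Matrix.one_mulVec]
    intro j
    have := congrFun hMv' j
    simp only [Matrix.mulVec, dotProduct] at this
    rw [← this]
    exact Finset.sum_congr rfl fun l _ => mul_comm (v l) (M j l)
  have hG0 : G x₀ = 0 := by
    rw [hG_def]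
    ext j
    simp only [WithLp.equiv_symm_apply, PiLp.toLp_apply]
    rw [← hM_def, hMv j]
    simp
  have hGnorm : ∀ y ∈ s, ‖G y‖ ≤ K * ‖y - x₀‖ ^ α := by
    intro y hy
    have hr0 : (0:ℝ) ≤ ‖y - x₀‖ := norm_nonneg _
    have hrα : (0:ℝ) ≤ ‖y - x₀‖ ^ α := Real.rpow_nonneg hr0 α
    have hsplit : G y = (fax a y - fax a x₀) -
        ((WithLp.equiv 2 (Fin d → ℝ)).symm fun j => ∑ l, v l * (fxx a y j l - M j l)) := by
      rw [hG_def]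
      ext j
      simp only [WithLp.equiv_symm_apply, PiLp.toLp_apply, PiLp.sub_apply, mul_sub,
        Finset.sum_sub_distrib]
      rw [hMv j]
      ring
    rw [hsplit]
    have h2 : ‖fax a y - fax a x₀‖ ≤ Cα * ‖y - x₀‖ ^ α := hmix a ha y hy x₀ hx₀
    have h3 : ‖(WithLp.equiv 2 (Fin d → ℝ)).symm fun j => ∑ l, v l * (fxx a y j l - M j l)‖
        ≤ (d:ℝ)^2 * Vb * (Cα * ‖y - x₀‖ ^ α) := by
      refine le_trans (euc_norm_le_sum_abs _) ?_
      have hterm : ∀ j : Fin d, |∑ l, v l * (fxx a y j l - M j l)|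
          ≤ (d:ℝ) * (Vb * (Cα * ‖y - x₀‖ ^ α)) := by
        intro j
        calc |∑ l, v l * (fxx a y j l - M j l)| ≤ ∑ l, |v l * (fxx a y j l - M j l)| :=
              Finset.abs_sum_le_sum_abs _ _
          _ ≤ ∑ _l : Fin d, Vb * (Cα * ‖y - x₀‖ ^ α) := by
              apply Finset.sum_le_sum
              intro l _
              rw [abs_mul]
              exact mul_le_mul (hvb l) (hreg.hess_holder a ha y hy x₀ hx₀ j l)
                (abs_nonneg _) hVb0
          _ = (d:ℝ) * (Vb * (Cα * ‖y - x₀‖ ^ α)) := by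
              simp [Finset.sum_const]
      calc ∑ j : Fin d, |((WithLp.equiv 2 (Fin d → ℝ)).symm
              fun j => ∑ l, v l * (fxx a y j l - M j l)) j|
          = ∑ j : Fin d, |∑ l, v l * (fxx a y j l - M j l)| := by
            simp [WithLp.equiv_symm_apply, PiLp.toLp_apply]
        _ ≤ ∑ _j : Fin d, (d:ℝ) * (Vb * (Cα * ‖y - x₀‖ ^ α)) :=
            Finset.sum_le_sum fun j _ => hterm j
        _ = (d:ℝ)^2 * Vb * (Cα * ‖y - x₀‖ ^ α) := by
            simp [Finset.sum_const]; ring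
    calc ‖(fax a y - fax a x₀) - _‖ ≤ ‖fax a y - fax a x₀‖ + ‖_‖ := norm_sub_le _ _
      _ ≤ Cα * ‖y - x₀‖ ^ α + (d:ℝ)^2 * Vb * (Cα * ‖y - x₀‖ ^ α) := add_le_add h2 h3
      _ = K * ‖y - x₀‖ ^ α := by rw [hK_def]; ring
  constructor
  · have := hgrad x₀ hx₀
    rwa [hG0] at this
  · intro x hx
    have hseg : segment ℝ x₀ x ⊆ s := (convex_Rect d lo hi).segment_subset hx₀ hx
    have hder : ∀ z ∈ segment ℝ x₀ x,
        HasFDerivWithinAt (fun z => fa a z - ∑ k, v k * fx a z k)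
          (InnerProductSpace.toDual ℝ (EuclideanSpace ℝ (Fin d)) (G z)) (segment ℝ x₀ x) z :=
      fun z hz => ((hgrad z (hseg hz)).hasFDerivWithinAt).mono hseg
    have hbound : ∀ z ∈ segment ℝ x₀ x,
        ‖InnerProductSpace.toDual ℝ (EuclideanSpace ℝ (Fin d)) (G z)‖ ≤ K * ‖x - x₀‖ ^ α := by
      intro z hz
      rw [LinearIsometryEquiv.norm_map]
      refine (hGnorm z (hseg hz)).trans ?_
      exact mul_le_mul_of_nonneg_left
        (Real.rpow_le_rpow (norm_nonneg _) (seg_norm_le hz) hα.1.le) hK0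
    have hmvt := (convex_segment x₀ x).norm_image_sub_le_of_norm_hasFDerivWithin_le
      hder hbound (left_mem_segment ℝ x₀ x) (right_mem_segment ℝ x₀ x)
    rw [Real.norm_eq_abs] at hmvt
    have hKC : K ≤ 1 + |Cα| * (1 + (d:ℝ)^2 * ((d:ℝ) * ((d.factorial : ℝ) * b ^ d / |c₀|) * |B₃|)) := by
      rw [hK_def, hVb_def, abs_of_pos hCα, abs_of_pos hc₀, abs_of_nonneg hB₃0]
      linarith
    rcases eq_or_ne x x₀ with rfl | hne
    · simp only [sub_self, abs_zero, norm_zero]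
      rw [Real.zero_rpow (by nlinarith [hα.1] : (1:ℝ) + α ≠ 0)]
      simp
    · have hr : 0 < ‖x - x₀‖ := by
        rw [norm_pos_iff]
        intro h
        exact hne (sub_eq_zero.mp h)
      have hpow : ‖x - x₀‖ ^ ((1:ℝ) + α) = ‖x - x₀‖ ^ α * ‖x - x₀‖ := by
        rw [Real.rpow_add hr, Real.rpow_one]
        ring
      refine hmvt.trans ?_
      rw [hpow]
      have hrr : (0:ℝ) ≤ ‖x - x₀‖ ^ α * ‖x - x₀‖ :=
        mul_nonneg (Real.rpow_nonneg (norm_nonneg _) α) hr.le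
      calc K * ‖x - x₀‖ ^ α * ‖x - x₀‖ = K * (‖x - x₀‖ ^ α * ‖x - x₀‖) := by ring
        _ ≤ _ := mul_le_mul_of_nonneg_right hKC hrr
end
end
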